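/- arXiv:2411.18026 — 4 statements merged into one kernel-verified Lean document; each statement's English description precedes it below -/
import Mathlib

section
/- Suppose the family (x_i)_{i∈ι} of vectors x_i ∈ ℂ^{n} solves the original system, i.e., A_i x_i + Σ_{j≠i} U_i R_{ij} V_j x_j = f_i for every i ∈ ι. Then the family (y_i)_{i∈ι} defined by y_i := V_i x_i solves the compressed system, i.e., Ã_i y_i + Σ_{j≠i} R_{ij} y_j = f̃_i for every i ∈ ι. -/
open Matrix

/-- Upward step of the Martinsson–Rokhlin-type fast direct solver:
if `(x i)` solves the original system `A i *ᵥ x i + ∑_{j ≠ i} U i * R i j * V j *ᵥ x j = f i`,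
then `y i := V i *ᵥ x i` solves the compressed system
`Ã i *ᵥ y i + ∑_{j ≠ i} R i j *ᵥ y j = f̃ i`, where
`Ã i = (V i * (A i)⁻¹ * U i)⁻¹` and `f̃ i = Ã i *ᵥ (V i * (A i)⁻¹ *ᵥ f i)`. -/
theorem upward_step {ι : Type*} [Fintype ι] [DecidableEq ι] {n k : ℕ}
    (hn : 0 < n) (hk : 0 < k)
    (A : ι → Matrix (Fin n) (Fin n) ℂ)
    (U : ι → Matrix (Fin n) (Fin k) ℂ)
    (V : ι → Matrix (Fin k) (Fin n) ℂ)
    (R : ι → ι → Matrix (Fin k) (Fin k) ℂ)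
    (f : ι → Fin n → ℂ)
    (hA : ∀ i, IsUnit (A i))
    (hVAU : ∀ i, IsUnit (V i * (A i)⁻¹ * U i))
    (x : ι → Fin n → ℂ)
    (hx : ∀ i, A i *ᵥ x i
        + ∑ j ∈ Finset.univ.erase i, (U i * R i j * V j) *ᵥ x j = f i) :
    ∀ i, (V i * (A i)⁻¹ * U i)⁻¹ *ᵥ (V i *ᵥ x i)
        + ∑ j ∈ Finset.univ.erase i, R i j *ᵥ (V j *ᵥ x j)
      = (V i * (A i)⁻¹ * U i)⁻¹ *ᵥ ((V i * (A i)⁻¹) *ᵥ f i) := by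
  intro i
  have hdet : IsUnit (A i).det := (isUnit_iff_isUnit_det (A i)).mp (hA i)
  have hBdet : IsUnit (V i * (A i)⁻¹ * U i).det :=
    (isUnit_iff_isUnit_det _).mp (hVAU i)
  set S := ∑ j ∈ Finset.univ.erase i, (U i * R i j * V j) *ᵥ x j with hS
  have h1 : A i *ᵥ x i = f i - S := eq_sub_of_add_eq (hx i)
  have hxi : x i = (A i)⁻¹ *ᵥ (f i - S) := by
    have := congrArg (fun v => (A i)⁻¹ *ᵥ v) h1
    simpa [mulVec_mulVec, nonsing_inv_mul _ hdet] using this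
  have key : (V i * (A i)⁻¹) *ᵥ S
      = (V i * (A i)⁻¹ * U i) *ᵥ ∑ j ∈ Finset.univ.erase i, R i j *ᵥ (V j *ᵥ x j) := by
    rw [hS]
    simp only [← mulVecLin_apply, map_sum]
    refine Finset.sum_congr rfl fun j _ => ?_
    simp [mulVecLin_apply, mulVec_mulVec, Matrix.mul_assoc]
  have hVx : V i *ᵥ x i
      = (V i * (A i)⁻¹) *ᵥ f i
        - (V i * (A i)⁻¹ * U i) *ᵥ ∑ j ∈ Finset.univ.erase i, R i j *ᵥ (V j *ᵥ x j) := by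
    rw [hxi, mulVec_mulVec, mulVec_sub, key]
  rw [hVx, mulVec_sub]
  have hcancel : (V i * (A i)⁻¹ * U i)⁻¹ *ᵥ
      (V i * (A i)⁻¹ * U i) *ᵥ (∑ j ∈ Finset.univ.erase i, R i j *ᵥ (V j *ᵥ x j))
      = ∑ j ∈ Finset.univ.erase i, R i j *ᵥ (V j *ᵥ x j) := by
    rw [mulVec_mulVec, nonsing_inv_mul _ hBdet, one_mulVec]
  rw [hcancel]
  abel
end

section
/- Suppose the family (x_i)_{i∈ι} of vectors x_i ∈ ℂ^{n} solves the original system, i.e., A_i x_i + Σ_{j≠i} U_i R_{ij} V_j x_j = f_i for every i ∈ ι, and set y_i := V_i x_i. Then for every i ∈ ι the downward recovery formula holds: x_i = A_i^{-1} f_i − A_i^{-1} U_i f̃_i + A_i^{-1} U_i Ã_i y_i. -/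
open Matrix

/-- Downward conversion formula of the Martinsson–Rokhlin-type fast direct solver:
if `(x i)` solves the original system and `y i := V i *ᵥ x i`, then
`x i = (A i)⁻¹ *ᵥ f i - (A i)⁻¹ * U i *ᵥ f̃ i + (A i)⁻¹ * U i * Ã i *ᵥ y i`,
where `Ã i = (V i * (A i)⁻¹ * U i)⁻¹` and `f̃ i = Ã i *ᵥ (V i * (A i)⁻¹ *ᵥ f i)`. -/
theorem downward_formula {ι : Type*} [Fintype ι] [DecidableEq ι] {n k : ℕ}
    (hn : 0 < n) (hk : 0 < k)
    (A : ι → Matrix (Fin n) (Fin n) ℂ)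
    (U : ι → Matrix (Fin n) (Fin k) ℂ)
    (V : ι → Matrix (Fin k) (Fin n) ℂ)
    (R : ι → ι → Matrix (Fin k) (Fin k) ℂ)
    (f : ι → Fin n → ℂ)
    (hA : ∀ i, IsUnit (A i))
    (hVAU : ∀ i, IsUnit (V i * (A i)⁻¹ * U i))
    (x : ι → Fin n → ℂ)
    (hx : ∀ i, A i *ᵥ x i
        + ∑ j ∈ Finset.univ.erase i, (U i * R i j * V j) *ᵥ x j = f i)
    (y : ι → Fin k → ℂ)
    (hy : ∀ i, y i = V i *ᵥ x i) :
    ∀ i, x i = (A i)⁻¹ *ᵥ f i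
        - ((A i)⁻¹ * U i) *ᵥ
            ((V i * (A i)⁻¹ * U i)⁻¹ *ᵥ ((V i * (A i)⁻¹) *ᵥ f i))
        + ((A i)⁻¹ * U i * (V i * (A i)⁻¹ * U i)⁻¹) *ᵥ y i := by
  intro i
  set s : Fin k → ℂ := ∑ j ∈ Finset.univ.erase i, (R i j * V j) *ᵥ x j with hs
  have hAinv : (A i)⁻¹ * A i = 1 := nonsing_inv_mul _ ((isUnit_iff_isUnit_det _).mp (hA i))
  have hBinv : (V i * (A i)⁻¹ * U i)⁻¹ * (V i * (A i)⁻¹ * U i) = 1 :=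
    nonsing_inv_mul _ ((isUnit_iff_isUnit_det _).mp (hVAU i))
  have hsum : ∑ j ∈ Finset.univ.erase i, (U i * R i j * V j) *ᵥ x j = U i *ᵥ s := by
    rw [hs]
    simp only [← mulVecLin_apply, map_sum, mulVecLin_mul, LinearMap.comp_apply]
  have hx' : x i = (A i)⁻¹ *ᵥ f i - ((A i)⁻¹ * U i) *ᵥ s := by
    have h1 := hx i
    rw [hsum] at h1
    have h2 : A i *ᵥ x i = f i - U i *ᵥ s := by rw [← h1]; abel
    calc x i = ((A i)⁻¹ * A i) *ᵥ x i := by rw [hAinv, one_mulVec]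
    _ = (A i)⁻¹ *ᵥ (A i *ᵥ x i) := by rw [← mulVec_mulVec]
    _ = (A i)⁻¹ *ᵥ (f i - U i *ᵥ s) := by rw [h2]
    _ = (A i)⁻¹ *ᵥ f i - ((A i)⁻¹ * U i) *ᵥ s := by
        rw [mulVec_sub, ← mulVec_mulVec]
  have hyi : y i = (V i * (A i)⁻¹) *ᵥ f i - (V i * (A i)⁻¹ * U i) *ᵥ s := by
    rw [hy i, hx', mulVec_sub]
    simp only [mulVec_mulVec, Matrix.mul_assoc]
  have hss : s = (V i * (A i)⁻¹ * U i)⁻¹ *ᵥ ((V i * (A i)⁻¹) *ᵥ f i)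
      - (V i * (A i)⁻¹ * U i)⁻¹ *ᵥ y i := by
    rw [hyi, mulVec_sub]
    simp only [mulVec_mulVec, hBinv, one_mulVec]
    abel
  rw [hx', hss, mulVec_sub]
  simp only [mulVec_mulVec, Matrix.mul_assoc]
  abel
end

section
/- Suppose the family (y_i)_{i∈ι} of vectors y_i ∈ ℂ^{k} solves the compressed system, i.e., Ã_i y_i + Σ_{j≠i} R_{ij} y_j = f̃_i for every i ∈ ι, and define x_i := A_i^{-1} f_i − A_i^{-1} U_i f̃_i + A_i^{-1} U_i Ã_i y_i for every i. Then (1) V_i x_i = y_i for every i ∈ ι, and (2) the family (x_i)_{i∈ι} solves the original system: A_i x_i + Σ_{j≠i} U_i R_{ij} V_j x_j = f_i for every i ∈ ι. -/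
open Matrix

/-- Correctness of the downward step of the Martinsson–Rokhlin-type fast direct solver:
if `(y i)` solves the compressed system and `x i` is defined by the downward recovery
formula, then `V i *ᵥ x i = y i` and `(x i)` solves the original system.
Here `Ã i = (V i * (A i)⁻¹ * U i)⁻¹` and `f̃ i = Ã i *ᵥ (V i * (A i)⁻¹ *ᵥ f i)`. -/
theorem downward_step_correct {ι : Type*} [Fintype ι] [DecidableEq ι] {n k : ℕ}
    (hn : 0 < n) (hk : 0 < k)
    (A : ι → Matrix (Fin n) (Fin n) ℂ)
    (U : ι → Matrix (Fin n) (Fin k) ℂ)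
    (V : ι → Matrix (Fin k) (Fin n) ℂ)
    (R : ι → ι → Matrix (Fin k) (Fin k) ℂ)
    (f : ι → Fin n → ℂ)
    (hA : ∀ i, IsUnit (A i))
    (hVAU : ∀ i, IsUnit (V i * (A i)⁻¹ * U i))
    (y : ι → Fin k → ℂ)
    (hy : ∀ i, (V i * (A i)⁻¹ * U i)⁻¹ *ᵥ y i
        + ∑ j ∈ Finset.univ.erase i, R i j *ᵥ y j
      = (V i * (A i)⁻¹ * U i)⁻¹ *ᵥ ((V i * (A i)⁻¹) *ᵥ f i))
    (x : ι → Fin n → ℂ)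
    (hx : ∀ i, x i = (A i)⁻¹ *ᵥ f i
        - ((A i)⁻¹ * U i) *ᵥ
            ((V i * (A i)⁻¹ * U i)⁻¹ *ᵥ ((V i * (A i)⁻¹) *ᵥ f i))
        + ((A i)⁻¹ * U i * (V i * (A i)⁻¹ * U i)⁻¹) *ᵥ y i) :
    (∀ i, V i *ᵥ x i = y i) ∧
      (∀ i, A i *ᵥ x i
          + ∑ j ∈ Finset.univ.erase i, (U i * R i j * V j) *ᵥ x j = f i) := by
  have hdet : ∀ i, IsUnit (V i * (A i)⁻¹ * U i).det :=
    fun i => (Matrix.isUnit_iff_isUnit_det _).mp (hVAU i)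
  have hAdet : ∀ i, IsUnit (A i).det :=
    fun i => (Matrix.isUnit_iff_isUnit_det _).mp (hA i)
  have hinv : ∀ i, V i * (A i)⁻¹ * U i * (V i * (A i)⁻¹ * U i)⁻¹ = 1 :=
    fun i => Matrix.mul_nonsing_inv _ (hdet i)
  have hAinv : ∀ i, A i * (A i)⁻¹ = 1 := fun i => Matrix.mul_nonsing_inv _ (hAdet i)
  have hVx : ∀ i, V i *ᵥ x i = y i := by
    intro i
    rw [hx i]
    simp [Matrix.mulVec_add, Matrix.mulVec_sub, Matrix.mulVec_mulVec,
      ← Matrix.mul_assoc, hinv i]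
  refine ⟨hVx, fun i => ?_⟩
  have hAx : A i *ᵥ x i = f i
      - U i *ᵥ ((V i * (A i)⁻¹ * U i)⁻¹ *ᵥ ((V i * (A i)⁻¹) *ᵥ f i))
      + (U i * (V i * (A i)⁻¹ * U i)⁻¹) *ᵥ y i := by
    rw [hx i]
    simp [Matrix.mulVec_add, Matrix.mulVec_sub, Matrix.mulVec_mulVec,
      ← Matrix.mul_assoc, hAinv i]
  have hsum : ∑ j ∈ Finset.univ.erase i, (U i * R i j * V j) *ᵥ x j
      = U i *ᵥ (∑ j ∈ Finset.univ.erase i, R i j *ᵥ y j) := by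
    rw [show U i *ᵥ (∑ j ∈ Finset.univ.erase i, R i j *ᵥ y j)
        = ∑ j ∈ Finset.univ.erase i, U i *ᵥ (R i j *ᵥ y j) from
      map_sum ((U i).mulVecLin) _ _]
    refine Finset.sum_congr rfl fun j _ => ?_
    rw [← hVx j, Matrix.mulVec_mulVec, Matrix.mulVec_mulVec, Matrix.mul_assoc]
  have hy' : ∑ j ∈ Finset.univ.erase i, R i j *ᵥ y j
      = (V i * (A i)⁻¹ * U i)⁻¹ *ᵥ ((V i * (A i)⁻¹) *ᵥ f i)
        - (V i * (A i)⁻¹ * U i)⁻¹ *ᵥ y i := by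
    rw [← hy i]; abel
  rw [hAx, hsum, hy', Matrix.mulVec_sub]
  simp only [Matrix.mulVec_mulVec]
  abel
end

section
/- The map sending a family (x_i)_{i∈ι} to the family (V_i x_i)_{i∈ι} restricts to a bijection from the set of solutions of the original system onto the set of solutions of the compressed system; its inverse sends a compressed solution (y_i)_{i∈ι} to the family x_i := A_i^{-1} f_i − A_i^{-1} U_i f̃_i + A_i^{-1} U_i Ã_i y_i. In particular, the original system has a unique solution if and only if the compressed system has a unique solution. -/
open Matrix

private lemma mulVec_sum' {m p ι : Type*} [Fintype p] (s : Finset ι)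
    (M : Matrix m p ℂ) (v : ι → p → ℂ) :
    M *ᵥ (∑ j ∈ s, v j) = ∑ j ∈ s, M *ᵥ v j :=
  map_sum M.mulVecLin v s

/-- Combining the upward and downward steps of the Martinsson–Rokhlin-type fast direct
solver: `x ↦ (V i *ᵥ x i)` is a bijection from the set of solutions of the original
system onto the set of solutions of the compressed system, with inverse
`y ↦ ((A i)⁻¹ *ᵥ f i - (A i)⁻¹ * U i *ᵥ f̃ i + (A i)⁻¹ * U i * Ã i *ᵥ y i)`.
In particular the original system has a unique solution iff the compressed one does. -/
theorem upward_downward_bijection {ι : Type*} [Fintype ι] [DecidableEq ι] {n k : ℕ}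
    (hn : 0 < n) (hk : 0 < k)
    (A : ι → Matrix (Fin n) (Fin n) ℂ)
    (U : ι → Matrix (Fin n) (Fin k) ℂ)
    (V : ι → Matrix (Fin k) (Fin n) ℂ)
    (R : ι → ι → Matrix (Fin k) (Fin k) ℂ)
    (f : ι → Fin n → ℂ)
    (hA : ∀ i, IsUnit (A i))
    (hVAU : ∀ i, IsUnit (V i * (A i)⁻¹ * U i)) :
    let Φ : (ι → Fin n → ℂ) → (ι → Fin k → ℂ) := fun x i => V i *ᵥ x i
    let Ψ : (ι → Fin k → ℂ) → (ι → Fin n → ℂ) := fun y i =>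
      (A i)⁻¹ *ᵥ f i
        - ((A i)⁻¹ * U i) *ᵥ
            ((V i * (A i)⁻¹ * U i)⁻¹ *ᵥ ((V i * (A i)⁻¹) *ᵥ f i))
        + ((A i)⁻¹ * U i * (V i * (A i)⁻¹ * U i)⁻¹) *ᵥ y i
    let origSol : Set (ι → Fin n → ℂ) :=
      {x | ∀ i, A i *ᵥ x i
          + ∑ j ∈ Finset.univ.erase i, (U i * R i j * V j) *ᵥ x j = f i}
    let compSol : Set (ι → Fin k → ℂ) :=
      {y | ∀ i, (V i * (A i)⁻¹ * U i)⁻¹ *ᵥ y i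
          + ∑ j ∈ Finset.univ.erase i, R i j *ᵥ y j
        = (V i * (A i)⁻¹ * U i)⁻¹ *ᵥ ((V i * (A i)⁻¹) *ᵥ f i)}
    Set.BijOn Φ origSol compSol ∧ Set.InvOn Ψ Φ origSol compSol ∧
      ((∃! x, x ∈ origSol) ↔ (∃! y, y ∈ compSol)) := by
  intro Φ Ψ origSol compSol
  have hAdet : ∀ i, IsUnit (A i).det := fun i => (Matrix.isUnit_iff_isUnit_det _).mp (hA i)
  have hBdet : ∀ i, IsUnit (V i * (A i)⁻¹ * U i).det :=
    fun i => (Matrix.isUnit_iff_isUnit_det _).mp (hVAU i)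
  have hA1 : ∀ i, (A i)⁻¹ * A i = 1 := fun i => Matrix.nonsing_inv_mul _ (hAdet i)
  have hA2 : ∀ i, A i * (A i)⁻¹ = 1 := fun i => Matrix.mul_nonsing_inv _ (hAdet i)
  have hB1 : ∀ i, (V i * (A i)⁻¹ * U i)⁻¹ * (V i * (A i)⁻¹ * U i) = 1 :=
    fun i => Matrix.nonsing_inv_mul _ (hBdet i)
  have hB2 : ∀ i, (V i * (A i)⁻¹ * U i) * (V i * (A i)⁻¹ * U i)⁻¹ = 1 :=
    fun i => Matrix.mul_nonsing_inv _ (hBdet i)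
  -- vector-level cancellation lemmas
  have vA1 : ∀ i (v : Fin n → ℂ), (A i)⁻¹ *ᵥ (A i *ᵥ v) = v := fun i v => by
    rw [Matrix.mulVec_mulVec, hA1, Matrix.one_mulVec]
  have vA2 : ∀ i (v : Fin n → ℂ), A i *ᵥ ((A i)⁻¹ *ᵥ v) = v := fun i v => by
    rw [Matrix.mulVec_mulVec, hA2, Matrix.one_mulVec]
  have vB1 : ∀ i (v : Fin k → ℂ),
      (V i * (A i)⁻¹ * U i)⁻¹ *ᵥ (V i *ᵥ ((A i)⁻¹ *ᵥ (U i *ᵥ v))) = v := fun i v => by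
    simp only [Matrix.mulVec_mulVec]
    rw [show V i * ((A i)⁻¹ * U i) = V i * (A i)⁻¹ * U i from (Matrix.mul_assoc _ _ _).symm,
      hB1, Matrix.one_mulVec]
  have vB2 : ∀ i (v : Fin k → ℂ),
      V i *ᵥ ((A i)⁻¹ *ᵥ (U i *ᵥ ((V i * (A i)⁻¹ * U i)⁻¹ *ᵥ v))) = v := fun i v => by
    simp only [Matrix.mulVec_mulVec]
    rw [show V i * ((A i)⁻¹ * (U i * (V i * (A i)⁻¹ * U i)⁻¹))
        = V i * (A i)⁻¹ * U i * (V i * (A i)⁻¹ * U i)⁻¹ by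
        rw [← Matrix.mul_assoc, ← Matrix.mul_assoc], hB2, Matrix.one_mulVec]
  -- rewrite the original coupling sum
  have hsum : ∀ (x : ι → Fin n → ℂ) i,
      ∑ j ∈ Finset.univ.erase i, (U i * R i j * V j) *ᵥ x j
        = U i *ᵥ (∑ j ∈ Finset.univ.erase i, R i j *ᵥ (V j *ᵥ x j)) := by
    intro x i
    rw [mulVec_sum']
    refine Finset.sum_congr rfl fun j _ => ?_
    simp only [Matrix.mulVec_mulVec, Matrix.mul_assoc]
  -- forward: Φ maps origSol into compSol
  have hfwd : ∀ x ∈ origSol, Φ x ∈ compSol := by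
    intro x hx i
    have hxi := hx i
    rw [hsum] at hxi
    set T := ∑ j ∈ Finset.univ.erase i, R i j *ᵥ (V j *ᵥ x j) with hT
    show (V i * (A i)⁻¹ * U i)⁻¹ *ᵥ (V i *ᵥ x i) + T
        = (V i * (A i)⁻¹ * U i)⁻¹ *ᵥ ((V i * (A i)⁻¹) *ᵥ f i)
    rw [← hxi]
    simp only [Matrix.mulVec_add, ← Matrix.mulVec_mulVec, vA1, vB1]
  -- key: V j *ᵥ (Ψ y) j = y j always
  have hVΨ : ∀ (y : ι → Fin k → ℂ) j, V j *ᵥ (Ψ y) j = y j := by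
    intro y j
    show V j *ᵥ ((A j)⁻¹ *ᵥ f j
        - ((A j)⁻¹ * U j) *ᵥ ((V j * (A j)⁻¹ * U j)⁻¹ *ᵥ ((V j * (A j)⁻¹) *ᵥ f j))
        + ((A j)⁻¹ * U j * (V j * (A j)⁻¹ * U j)⁻¹) *ᵥ y j) = y j
    simp only [Matrix.mulVec_add, Matrix.mulVec_sub, ← Matrix.mulVec_mulVec, vB2]
    abel
  -- backward: Ψ maps compSol into origSol
  have hbwd : ∀ y ∈ compSol, Ψ y ∈ origSol := by
    intro y hy i
    rw [hsum]
    simp only [hVΨ]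
    have hT : ∑ j ∈ Finset.univ.erase i, R i j *ᵥ y j
        = (V i * (A i)⁻¹ * U i)⁻¹ *ᵥ ((V i * (A i)⁻¹) *ᵥ f i)
          - (V i * (A i)⁻¹ * U i)⁻¹ *ᵥ y i := by
      rw [← hy i]; abel
    rw [hT]
    show A i *ᵥ ((A i)⁻¹ *ᵥ f i
        - ((A i)⁻¹ * U i) *ᵥ ((V i * (A i)⁻¹ * U i)⁻¹ *ᵥ ((V i * (A i)⁻¹) *ᵥ f i))
        + ((A i)⁻¹ * U i * (V i * (A i)⁻¹ * U i)⁻¹) *ᵥ y i)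
        + U i *ᵥ _ = f i
    simp only [Matrix.mulVec_add, Matrix.mulVec_sub, ← Matrix.mulVec_mulVec, vA2]
    abel
  -- left inverse on origSol
  have hleft : ∀ x ∈ origSol, Ψ (Φ x) = x := by
    intro x hx
    funext i
    have hxi := hx i
    rw [hsum] at hxi
    have hcomp : (V i * (A i)⁻¹ * U i)⁻¹ *ᵥ (V i *ᵥ x i)
        + ∑ j ∈ Finset.univ.erase i, R i j *ᵥ (V j *ᵥ x j)
        = (V i * (A i)⁻¹ * U i)⁻¹ *ᵥ ((V i * (A i)⁻¹) *ᵥ f i) := hfwd x hx i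
    set T := ∑ j ∈ Finset.univ.erase i, R i j *ᵥ (V j *ᵥ x j) with hTdef
    have hx2 : x i = (A i)⁻¹ *ᵥ f i - (A i)⁻¹ *ᵥ (U i *ᵥ T) := by
      have h := congrArg (fun v => (A i)⁻¹ *ᵥ v) hxi
      simp only [Matrix.mulVec_add, vA1] at h
      rw [← h]; abel
    have hTval : T = (V i * (A i)⁻¹ * U i)⁻¹ *ᵥ ((V i * (A i)⁻¹) *ᵥ f i)
        - (V i * (A i)⁻¹ * U i)⁻¹ *ᵥ (V i *ᵥ x i) := by
      rw [← hcomp]; abel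
    show (A i)⁻¹ *ᵥ f i
        - ((A i)⁻¹ * U i) *ᵥ ((V i * (A i)⁻¹ * U i)⁻¹ *ᵥ ((V i * (A i)⁻¹) *ᵥ f i))
        + ((A i)⁻¹ * U i * (V i * (A i)⁻¹ * U i)⁻¹) *ᵥ (V i *ᵥ x i) = x i
    conv_rhs => rw [hx2, hTval]
    simp only [Matrix.mulVec_sub, ← Matrix.mulVec_mulVec]
    abel
  -- right inverse on compSol
  have hright : ∀ y ∈ compSol, Φ (Ψ y) = y := fun y _ => funext fun j => hVΨ y j
  have hinv : Set.InvOn Ψ Φ origSol compSol := ⟨hleft, hright⟩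
  have hbij : Set.BijOn Φ origSol compSol := hinv.bijOn hfwd hbwd
  refine ⟨hbij, hinv, ?_⟩
  constructor
  · rintro ⟨x, hx, hxu⟩
    refine ⟨Φ x, hfwd x hx, fun y hy => ?_⟩
    have h : Ψ y = x := hxu _ (hbwd y hy)
    rw [← hright y hy, h]
  · rintro ⟨y, hy, hyu⟩
    refine ⟨Ψ y, hbwd y hy, fun x hx => ?_⟩
    have h : Φ x = y := hyu _ (hfwd x hx)
    rw [← hleft x hx, h]
end
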